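/- Let $n \ge 1$, cells of constant width $\Delta L > 0$ with boundaries $l_i = (i-1)\Delta L$, and $H \in \mathbb{Z}_{\ge 0}$. Suppose $P(z|e_j)$ is the uniform density on $[l_j - H\Delta L,\, l_{j+1} + H\Delta L]$ (of total width $(2H+1)\Delta L$). Then for each $j$ and $k$, $\int_{l_k}^{l_{k+1}} P(z|e_j)\,dz = \frac{1}{2H+1}$ if $|k - j| \le H$ and $0$ otherwise, and consequently $\sum_{j=0}^n P(e_j) \sum_{k=1}^n C_k \int_{l_k}^{l_{k+1}} P(z|e_j)\,dz = \sum_{j=0}^n P(e_j)\, \frac{D_{j+H} - D_{j-H-1}}{2H+1}$, where $D_i = \sum_{1 \le k \le \min(i,n)} C_k$ for $i \ge 1$ and $D_i = 0$ for $i \le 0$. -/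

import Mathlib

open MeasureTheory

lemma aux_int (a b c x y : ℝ) (hxy : x ≤ y) :
    (∫ z in x..y, (if a ≤ z ∧ z ≤ b then c else 0)) =
      ((volume (Set.Ioc x y ∩ Set.Icc a b)).toReal) * c := by
  rw [intervalIntegral.integral_of_le hxy]
  have h : (fun z => if a ≤ z ∧ z ≤ b then c else 0)
      = (Set.Icc a b).indicator (fun _ => c) := by
    funext z; simp [Set.indicator, Set.mem_Icc]
  rw [h, MeasureTheory.setIntegral_indicator measurableSet_Icc,
    MeasureTheory.setIntegral_const, smul_eq_mul]
  rfl

lemma aux_in (a b c x y : ℝ) (hxy : x ≤ y) (hax : a ≤ x) (hyb : y ≤ b) :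
    (∫ z in x..y, (if a ≤ z ∧ z ≤ b then c else 0)) = (y - x) * c := by
  rw [aux_int a b c x y hxy]
  have : Set.Ioc x y ∩ Set.Icc a b = Set.Ioc x y := by
    apply Set.inter_eq_left.2
    intro z hz
    exact ⟨le_trans hax (le_of_lt hz.1), le_trans hz.2 hyb⟩
  rw [this, Real.volume_Ioc, ENNReal.toReal_ofReal (by linarith)]

lemma aux_out (a b c x y : ℝ) (hxy : x ≤ y) (h : y ≤ a ∨ b ≤ x) :
    (∫ z in x..y, (if a ≤ z ∧ z ≤ b then c else 0)) = 0 := by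
  rw [aux_int a b c x y hxy]
  have hv : volume (Set.Ioc x y ∩ Set.Icc a b) = 0 := by
    rcases h with h | h
    · have : Set.Ioc x y ∩ Set.Icc a b ⊆ Set.Icc a y := by
        intro z hz; exact ⟨hz.2.1, hz.1.2⟩
      refine le_antisymm (le_trans (measure_mono this) ?_) zero_le
      rw [Real.volume_Icc]; exact le_of_eq (ENNReal.ofReal_eq_zero.2 (by linarith))
    · have : Set.Ioc x y ∩ Set.Icc a b ⊆ Set.Icc x b := by
        intro z hz; exact ⟨le_of_lt hz.1.1, hz.2.2⟩
      refine le_antisymm (le_trans (measure_mono this) ?_) zero_le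
      rw [Real.volume_Icc]; exact le_of_eq (ENNReal.ofReal_eq_zero.2 (by linarith))
  rw [hv]; simp

theorem stmt_6 (n : ℕ) (hn : 1 ≤ n) (ΔL : ℝ) (hΔL : 0 < ΔL) (H : ℕ)
    (l : ℕ → ℝ) (hldef : ∀ i, l i = ((i : ℝ) - 1) * ΔL)
    (p : ℕ → ℝ → ℝ)
    (hp : ∀ j z, p j z =
      if l j - (H : ℝ) * ΔL ≤ z ∧ z ≤ l (j + 1) + (H : ℝ) * ΔL
      then (((2 * H + 1 : ℕ) : ℝ) * ΔL)⁻¹ else 0)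
    (Pe : ℕ → ℝ) (hPe : ∀ j, j ≤ n → 0 ≤ Pe j)
    (C : ℕ → ℝ) (D : ℤ → ℝ)
    (hD : ∀ i : ℤ, D i = ∑ k ∈ Finset.Icc 1 n, if (k : ℤ) ≤ i then C k else 0) :
    (∀ j, j ≤ n → ∀ k, 1 ≤ k → k ≤ n →
        (∫ z in (l k)..(l (k + 1)), p j z)
          = if |(k : ℤ) - (j : ℤ)| ≤ (H : ℤ) then ((2 * H + 1 : ℕ) : ℝ)⁻¹ else 0) ∧
      ∑ j ∈ Finset.range (n + 1),
          Pe j * ∑ k ∈ Finset.Icc 1 n, C k * ∫ z in (l k)..(l (k + 1)), p j z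
        = ∑ j ∈ Finset.range (n + 1),
            Pe j * (D ((j : ℤ) + H) - D ((j : ℤ) - H - 1)) / ((2 * H + 1 : ℕ) : ℝ) := by
  have hden : ((2 * H + 1 : ℕ) : ℝ) ≠ 0 := by positivity
  have key : ∀ j, j ≤ n → ∀ k, 1 ≤ k → k ≤ n →
      (∫ z in (l k)..(l (k + 1)), p j z)
        = if |(k : ℤ) - (j : ℤ)| ≤ (H : ℤ) then ((2 * H + 1 : ℕ) : ℝ)⁻¹ else 0 := by
    intro j hj k h1k hkn
    have hxy : l k ≤ l (k + 1) := by
      rw [hldef, hldef]; push_cast; nlinarith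
    have hint : (∫ z in (l k)..(l (k + 1)), p j z)
        = ∫ z in (l k)..(l (k + 1)),
            (if l j - (H : ℝ) * ΔL ≤ z ∧ z ≤ l (j + 1) + (H : ℝ) * ΔL
             then (((2 * H + 1 : ℕ) : ℝ) * ΔL)⁻¹ else 0) := by
      apply intervalIntegral.integral_congr
      intro z _; exact hp j z
    rw [hint]
    by_cases habs : |(k : ℤ) - (j : ℤ)| ≤ (H : ℤ)
    · rw [if_pos habs]
      rw [abs_le] at habs
      have h1 : ((j : ℝ) - (H : ℝ)) ≤ (k : ℝ) := by
        have : (j : ℤ) - (H : ℤ) ≤ (k : ℤ) := by omega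
        exact_mod_cast this
      have h2 : (k : ℝ) ≤ (j : ℝ) + (H : ℝ) := by
        have : (k : ℤ) ≤ (j : ℤ) + (H : ℤ) := by omega
        exact_mod_cast this
      rw [aux_in _ _ _ _ _ hxy]
      · rw [hldef, hldef]
        push_cast
        field_simp
        ring
      · rw [hldef, hldef]; push_cast; nlinarith
      · rw [hldef, hldef]; push_cast; nlinarith
    · rw [if_neg habs]
      rw [abs_le, not_and_or, not_le, not_le] at habs
      apply aux_out _ _ _ _ _ hxy
      rcases habs with hh | hh
      · left
        have : (k : ℝ) ≤ (j : ℝ) - 1 - (H : ℝ) := by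
          have : (k : ℤ) ≤ (j : ℤ) - 1 - (H : ℤ) := by omega
          exact_mod_cast this
        rw [hldef, hldef]; push_cast; nlinarith
      · right
        have : (j : ℝ) + (H : ℝ) ≤ (k : ℝ) - 1 := by
          have : (j : ℤ) + (H : ℤ) ≤ (k : ℤ) - 1 := by omega
          exact_mod_cast this
        rw [hldef, hldef]; push_cast; nlinarith
  refine ⟨key, ?_⟩
  apply Finset.sum_congr rfl
  intro j hj
  rw [Finset.mem_range] at hj
  have hj' : j ≤ n := by omega
  have hsum : ∑ k ∈ Finset.Icc 1 n, C k * ∫ z in (l k)..(l (k + 1)), p j z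
      = (D ((j : ℤ) + H) - D ((j : ℤ) - H - 1)) * ((2 * H + 1 : ℕ) : ℝ)⁻¹ := by
    rw [hD, hD, ← Finset.sum_sub_distrib, Finset.sum_mul]
    apply Finset.sum_congr rfl
    intro k hk
    rw [Finset.mem_Icc] at hk
    rw [key j hj' k hk.1 hk.2]
    have hre : |(k : ℤ) - (j : ℤ)| ≤ (H : ℤ) ↔
        ((j : ℤ) - H ≤ (k : ℤ) ∧ (k : ℤ) ≤ (j : ℤ) + H) := by
      rw [abs_le]; omega
    simp only [hre]
    split_ifs with h1 h2 h3 <;> first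
      | ring1
      | (exfalso; omega)
  rw [hsum]
  field_simp
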